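/- For real numbers r, s, t with r+s+t > 2, r+t > 1, s+t > 1, and for any natural number n and any x > 0, one has Θ(r,s,t,x) = Σ_{ℓ=0}^{n} C(n,ℓ) x^ℓ Θ(r-n+ℓ, s-ℓ, t+n, x). -/

import Mathlib

open Real

noncomputable def Theta (r s t x : ℝ) : ℝ :=
  ∑' n : ℕ, ∑' m : ℕ,
    1 / (((n : ℝ) + 1) ^ r * ((m : ℝ) + 1) ^ s * (((n : ℝ) + 1) + ((m : ℝ) + 1) * x) ^ t)

noncomputable def Fterm (r s t x : ℝ) (n m : ℕ) : ℝ :=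
  1 / (((n : ℝ) + 1) ^ r * ((m : ℝ) + 1) ^ s * (((n : ℝ) + 1) + ((m : ℝ) + 1) * x) ^ t)

lemma Theta_eq (r s t x : ℝ) : Theta r s t x = ∑' n : ℕ, ∑' m : ℕ, Fterm r s t x n m := rfl

lemma Fterm_nonneg (r s t x : ℝ) (hx : 0 < x) (N M : ℕ) : 0 ≤ Fterm r s t x N M := by
  unfold Fterm
  positivity

lemma summable_rpow_shift {a : ℝ} (ha : 1 < a) :
    Summable (fun N : ℕ => ((N : ℝ) + 1) ^ (-a)) := by
  have h := Real.summable_one_div_nat_rpow.mpr ha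
  have h2 := (summable_nat_add_iff 1).mpr h
  refine h2.congr fun N => ?_
  push_cast
  rw [Real.rpow_neg (by positivity), one_div]

lemma dominate (r s t x : ℝ) (h1 : 2 < r + s + t) (h2 : 1 < r + t) (h3 : 1 < s + t)
    (hx : 0 < x) :
    ∃ a b C : ℝ, 1 < a ∧ 1 < b ∧ 0 < C ∧ ∀ N M : ℕ,
      Fterm r s t x N M ≤ C * ((N : ℝ) + 1) ^ (-a) * ((M : ℝ) + 1) ^ (-b) := by
  rcases le_or_gt t 0 with ht | ht
  · -- t ≤ 0 : r > 1 and s > 1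
    have h1x : (0:ℝ) < 1 + x := by linarith
    refine ⟨r + t, s + t, (1 + x) ^ (-t), by linarith, by linarith,
      Real.rpow_pos_of_pos h1x _, fun N M => ?_⟩
    set u : ℝ := (N : ℝ) + 1 with hu
    set w : ℝ := (M : ℝ) + 1 with hw
    have hu0 : (0:ℝ) < u := by positivity
    have hw0 : (0:ℝ) < w := by positivity
    have hu1 : (1:ℝ) ≤ u := by simp [hu]
    have hw1 : (1:ℝ) ≤ w := by simp [hw]
    have hle : u + w * x ≤ u * w * (1 + x) := by
      nlinarith [mul_nonneg hu0.le (sub_nonneg.mpr hw1),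
        mul_nonneg (mul_nonneg hw0.le hx.le) (sub_nonneg.mpr hu1)]
    have hp : (u * w * (1 + x)) ^ t ≤ (u + w * x) ^ t :=
      Real.rpow_le_rpow_of_nonpos (by positivity) hle ht
    have key : (1 + x) ^ t * u ^ (r + t) * w ^ (s + t) ≤ u ^ r * w ^ s * (u + w * x) ^ t := by
      have e : (1 + x) ^ t * u ^ (r + t) * w ^ (s + t)
          = u ^ r * w ^ s * ((u * w * (1 + x)) ^ t) := by
        rw [Real.rpow_add hu0, Real.rpow_add hw0, Real.mul_rpow (by positivity) h1x.le,
          Real.mul_rpow hu0.le hw0.le]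
        ring
      rw [e]
      exact mul_le_mul_of_nonneg_left hp (by positivity)
    calc Fterm r s t x N M = 1 / (u ^ r * w ^ s * (u + w * x) ^ t) := rfl
      _ ≤ 1 / ((1 + x) ^ t * u ^ (r + t) * w ^ (s + t)) :=
          one_div_le_one_div_of_le (by positivity) key
      _ = (1 + x) ^ (-t) * u ^ (-(r + t)) * w ^ (-(s + t)) := by
          rw [Real.rpow_neg h1x.le, Real.rpow_neg hu0.le, Real.rpow_neg hw0.le,
            one_div, mul_inv, mul_inv]
  · -- t > 0
    set lo : ℝ := max 0 (1 - r) with hlo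
    set hi : ℝ := min t (s + t - 1) with hhi
    have hlohi : lo < hi := by
      rw [hlo, hhi, lt_min_iff, max_lt_iff, max_lt_iff]
      exact ⟨⟨by linarith, by linarith⟩, ⟨by linarith, by linarith⟩⟩
    set t1 : ℝ := (lo + hi) / 2 with ht1
    set t2 : ℝ := t - t1 with ht2
    have hlot1 : lo < t1 := by rw [ht1]; linarith
    have ht1hi : t1 < hi := by rw [ht1]; linarith
    have ht1nn : 0 ≤ t1 := le_trans (le_max_left 0 (1 - r)) hlot1.le
    have ht1r : 1 - r < t1 := lt_of_le_of_lt (le_max_right 0 (1 - r)) hlot1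
    have ht2nn : 0 ≤ t2 := by
      have : t1 < t := lt_of_lt_of_le ht1hi (min_le_left _ _)
      rw [ht2]; linarith
    have ht2s : 1 - s < t2 := by
      have : t1 < s + t - 1 := lt_of_lt_of_le ht1hi (min_le_right _ _)
      rw [ht2]; linarith
    refine ⟨r + t1, s + t2, x ^ (-t2), by linarith, by linarith,
      Real.rpow_pos_of_pos hx _, fun N M => ?_⟩
    set u : ℝ := (N : ℝ) + 1 with hu
    set w : ℝ := (M : ℝ) + 1 with hw
    have hu0 : (0:ℝ) < u := by positivity
    have hw0 : (0:ℝ) < w := by positivity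
    have hp1 : u ^ t1 ≤ (u + w * x) ^ t1 :=
      Real.rpow_le_rpow hu0.le (by nlinarith) ht1nn
    have hp2 : (w * x) ^ t2 ≤ (u + w * x) ^ t2 :=
      Real.rpow_le_rpow (by positivity) (by nlinarith) ht2nn
    have key : x ^ t2 * u ^ (r + t1) * w ^ (s + t2) ≤ u ^ r * w ^ s * (u + w * x) ^ t := by
      have e : x ^ t2 * u ^ (r + t1) * w ^ (s + t2)
          = u ^ r * w ^ s * (u ^ t1 * (w * x) ^ t2) := by
        rw [Real.rpow_add hu0, Real.rpow_add hw0, Real.mul_rpow hw0.le hx.le]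
        ring
      have e2 : (u + w * x) ^ t = (u + w * x) ^ t1 * (u + w * x) ^ t2 := by
        rw [← Real.rpow_add (by positivity)]
        congr 1
        rw [ht2]; ring
      rw [e, e2]
      refine mul_le_mul_of_nonneg_left ?_ (by positivity)
      exact mul_le_mul hp1 hp2 (by positivity) (by positivity)
    calc Fterm r s t x N M = 1 / (u ^ r * w ^ s * (u + w * x) ^ t) := rfl
      _ ≤ 1 / (x ^ t2 * u ^ (r + t1) * w ^ (s + t2)) :=
          one_div_le_one_div_of_le (by positivity) key
      _ = x ^ (-t2) * u ^ (-(r + t1)) * w ^ (-(s + t2)) := by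
          rw [Real.rpow_neg hx.le, Real.rpow_neg hu0.le, Real.rpow_neg hw0.le,
            one_div, mul_inv, mul_inv]

lemma summable_F_M (r s t x : ℝ) (h1 : 2 < r + s + t) (h2 : 1 < r + t) (h3 : 1 < s + t)
    (hx : 0 < x) (N : ℕ) : Summable (fun M => Fterm r s t x N M) := by
  obtain ⟨a, b, C, ha, hb, hC, hbound⟩ := dominate r s t x h1 h2 h3 hx
  exact Summable.of_nonneg_of_le (fun M => Fterm_nonneg r s t x hx N M)
    (fun M => hbound N M) ((summable_rpow_shift hb).mul_left _)

lemma summable_F_N (r s t x : ℝ) (h1 : 2 < r + s + t) (h2 : 1 < r + t) (h3 : 1 < s + t)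
    (hx : 0 < x) : Summable (fun N => ∑' M, Fterm r s t x N M) := by
  obtain ⟨a, b, C, ha, hb, hC, hbound⟩ := dominate r s t x h1 h2 h3 hx
  have hS := summable_rpow_shift hb
  refine Summable.of_nonneg_of_le
    (fun N => tsum_nonneg fun M => Fterm_nonneg r s t x hx N M)
    (fun N => ?_) (((summable_rpow_shift ha).mul_left (C * ∑' M : ℕ, ((M:ℝ)+1) ^ (-b))))
  calc ∑' M, Fterm r s t x N M
      ≤ ∑' M : ℕ, C * ((N:ℝ)+1) ^ (-a) * ((M:ℝ)+1) ^ (-b) :=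
        Summable.tsum_le_tsum (fun M => hbound N M) (summable_F_M r s t x h1 h2 h3 hx N)
          (hS.mul_left _)
    _ = C * (∑' M : ℕ, ((M:ℝ)+1) ^ (-b)) * ((N:ℝ)+1) ^ (-a) := by
        rw [tsum_mul_left]; ring

lemma key_binom (u w x : ℝ) (hu : 0 < u) (n : ℕ) :
    ∑ ℓ ∈ Finset.range (n + 1), (n.choose ℓ : ℝ) * x ^ ℓ * (u ^ n * w ^ ℓ / u ^ ℓ)
      = (u + w * x) ^ n := by
  rw [show u + w * x = w * x + u by ring, add_pow]
  refine Finset.sum_congr rfl fun ℓ hℓ => ?_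
  have hℓn : ℓ ≤ n := Nat.lt_succ_iff.mp (Finset.mem_range.mp hℓ)
  rw [pow_sub₀ u hu.ne' hℓn, mul_pow]
  ring

lemma Fterm_eq (r s t x : ℝ) (hx : 0 < x) (n N M : ℕ) :
    Fterm r s t x N M = ∑ ℓ ∈ Finset.range (n + 1),
      (n.choose ℓ : ℝ) * x ^ ℓ * Fterm (r - n + ℓ) (s - ℓ) (t + n) x N M := by
  set u : ℝ := (N : ℝ) + 1 with hu'
  set w : ℝ := (M : ℝ) + 1 with hw'
  have hu : (0:ℝ) < u := by positivity
  have hw : (0:ℝ) < w := by positivity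
  have huv : (0:ℝ) < u + w * x := by positivity
  have hur : u ^ r ≠ 0 := (Real.rpow_pos_of_pos hu r).ne'
  have hws : w ^ s ≠ 0 := (Real.rpow_pos_of_pos hw s).ne'
  have huvt : (u + w * x) ^ t ≠ 0 := (Real.rpow_pos_of_pos huv t).ne'
  have expand : ∀ ℓ ∈ Finset.range (n + 1),
      (n.choose ℓ : ℝ) * x ^ ℓ * Fterm (r - n + ℓ) (s - ℓ) (t + n) x N M
      = ((n.choose ℓ : ℝ) * x ^ ℓ * (u ^ n * w ^ ℓ / u ^ ℓ)) *
        (1 / (u ^ r * w ^ s * (u + w * x) ^ t * (u + w * x) ^ n)) := by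
    intro ℓ _
    have e1 : u ^ (r - (n:ℝ) + (ℓ:ℝ)) = u ^ r * u ^ ℓ / u ^ n := by
      rw [show r - (n:ℝ) + (ℓ:ℝ) = r + (ℓ:ℝ) - (n:ℝ) by ring, Real.rpow_sub hu,
        Real.rpow_add hu, Real.rpow_natCast, Real.rpow_natCast]
    have e2 : w ^ (s - (ℓ:ℝ)) = w ^ s / w ^ ℓ := by
      rw [Real.rpow_sub hw, Real.rpow_natCast]
    have e3 : (u + w * x) ^ (t + (n:ℝ)) = (u + w * x) ^ t * (u + w * x) ^ n := by
      rw [Real.rpow_add huv, Real.rpow_natCast]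
    show (n.choose ℓ : ℝ) * x ^ ℓ *
        (1 / (u ^ (r - (n:ℝ) + (ℓ:ℝ)) * w ^ (s - (ℓ:ℝ)) * (u + w * x) ^ (t + (n:ℝ)))) = _
    rw [e1, e2, e3]
    have huℓ : u ^ ℓ ≠ 0 := pow_ne_zero _ hu.ne'
    have hun : u ^ n ≠ 0 := pow_ne_zero _ hu.ne'
    have hwℓ : w ^ ℓ ≠ 0 := pow_ne_zero _ hw.ne'
    have huvn : (u + w * x) ^ n ≠ 0 := pow_ne_zero _ huv.ne'
    field_simp
  rw [Finset.sum_congr rfl expand, ← Finset.sum_mul, key_binom u w x hu n]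
  show 1 / (u ^ r * w ^ s * (u + w * x) ^ t) = _
  have huvn : (u + w * x) ^ n ≠ 0 := pow_ne_zero _ huv.ne'
  field_simp

theorem theta_recursion (r s t : ℝ) (h1 : 2 < r + s + t) (h2 : 1 < r + t) (h3 : 1 < s + t)
    (n : ℕ) (x : ℝ) (hx : 0 < x) :
    Theta r s t x = ∑ ℓ ∈ Finset.range (n + 1),
      (n.choose ℓ : ℝ) * x ^ ℓ * Theta (r - n + ℓ) (s - ℓ) (t + n) x := by
  -- shifted hypotheses
  have hyp : ∀ ℓ ∈ Finset.range (n + 1),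
      2 < (r - n + ℓ) + (s - ℓ) + (t + n) ∧ 1 < (r - n + ℓ) + (t + n) ∧
        1 < (s - ℓ) + (t + n) := by
    intro ℓ hℓ
    have hℓn : (ℓ : ℝ) ≤ (n : ℝ) := by
      exact_mod_cast Nat.lt_succ_iff.mp (Finset.mem_range.mp hℓ)
    have hℓ0 : (0:ℝ) ≤ (ℓ : ℝ) := Nat.cast_nonneg ℓ
    refine ⟨by linarith, by linarith, by linarith⟩
  rw [Theta_eq]
  have step1 : ∀ N : ℕ, (∑' M, Fterm r s t x N M)
      = ∑ ℓ ∈ Finset.range (n + 1),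
        ∑' M, ((n.choose ℓ : ℝ) * x ^ ℓ * Fterm (r - n + ℓ) (s - ℓ) (t + n) x N M) := by
    intro N
    rw [tsum_congr (fun M => Fterm_eq r s t x hx n N M)]
    exact Summable.tsum_finsetSum fun ℓ hℓ => by
      obtain ⟨a1, a2, a3⟩ := hyp ℓ hℓ
      exact (summable_F_M _ _ _ x a1 a2 a3 hx N).mul_left _
  rw [tsum_congr step1]
  rw [Summable.tsum_finsetSum (f := fun ℓ N => ∑' M,
      ((n.choose ℓ : ℝ) * x ^ ℓ * Fterm (r - n + ℓ) (s - ℓ) (t + n) x N M)) ?_]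
  · refine Finset.sum_congr rfl fun ℓ hℓ => ?_
    have : ∀ N : ℕ, (∑' M, ((n.choose ℓ : ℝ) * x ^ ℓ * Fterm (r - n + ℓ) (s - ℓ) (t + n) x N M))
        = (n.choose ℓ : ℝ) * x ^ ℓ * ∑' M, Fterm (r - n + ℓ) (s - ℓ) (t + n) x N M :=
      fun N => tsum_mul_left
    rw [tsum_congr this, tsum_mul_left, Theta_eq]
  · intro ℓ hℓ
    obtain ⟨a1, a2, a3⟩ := hyp ℓ hℓ
    have : ∀ N : ℕ, (∑' M, ((n.choose ℓ : ℝ) * x ^ ℓ * Fterm (r - n + ℓ) (s - ℓ) (t + n) x N M))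
        = (n.choose ℓ : ℝ) * x ^ ℓ * ∑' M, Fterm (r - n + ℓ) (s - ℓ) (t + n) x N M :=
      fun N => tsum_mul_left
    exact Summable.congr ((summable_F_N _ _ _ x a1 a2 a3 hx).mul_left _) fun N => (this N).symm
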